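/- Let (A,∘,[·,·]) be a Gel'fand-Dorfman bialgebra over K, E a vector space containing A as a subspace, and V a complement of A in E (so E = A ⊕ V). Define two GD extending structures Ω(A,V) and Ω'(A,V) of A by V to be equivalent (Ω ≡ Ω') if there exist a linear map λ : V → A and a linear automorphism μ : V → V satisfying conditions (D1)–(D10) relating the two data, and let GH²(V,A) denote the quotient of the set GD(A,V) of all GD extending structures by ≡. Then the map GH²(V,A) → Extd(E,A) sending the equivalence class of Ω(A,V) to the equivalence class of the unified product A♮V (transported to E along E = A ⊕ V) is a bijection. -/

import Mathlib

namespace GDExt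

def IsNovikov {M : Type*} [AddCommGroup M] (mul : M → M → M) : Prop :=
  (∀ a b c, mul (mul a b) c - mul a (mul b c) = mul (mul b a) c - mul b (mul a c)) ∧
  ∀ a b c, mul (mul a b) c = mul (mul a c) b

def IsLieBracket {M : Type*} [AddCommGroup M] (br : M → M → M) : Prop :=
  (∀ a, br a a = 0) ∧ ∀ a b c, br a (br b c) = br (br a b) c + br b (br a c)

def IsGD {M : Type*} [AddCommGroup M] (mul br : M → M → M) : Prop :=
  IsNovikov mul ∧ IsLieBracket br ∧
  ∀ a b c, br a (mul b c) - br c (mul b a) + mul (br b a) c - mul (br b c) a - mul b (br a c) = 0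

variable {K : Type*} [Field K]
variable {A V : Type*} [AddCommGroup A] [Module K A] [AddCommGroup V] [Module K V]

/-- First component bilinear product of the unified product `A ♮ V`. -/
def uniMul (circ : A →ₗ[K] A →ₗ[K] A) (lA rA : A →ₗ[K] Module.End K V)
    (lV rV : V →ₗ[K] Module.End K A) (f : V →ₗ[K] V →ₗ[K] A)
    (st : V →ₗ[K] V →ₗ[K] V) : A × V → A × V → A × V :=
  fun p q =>
    (circ p.1 q.1 + lV p.2 q.1 + rV q.2 p.1 + f p.2 q.2,
     st p.2 q.2 + lA p.1 q.2 + rA q.1 p.2)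

/-- Bracket of the unified product `A ♮ V`. -/
def uniBr (brk : A →ₗ[K] A →ₗ[K] A) (tl : V →ₗ[K] A →ₗ[K] V) (tr : V →ₗ[K] A →ₗ[K] A)
    (hm : V →ₗ[K] V →ₗ[K] A) (vbr : V →ₗ[K] V →ₗ[K] V) : A × V → A × V → A × V :=
  fun p q =>
    (brk p.1 q.1 + tr p.2 q.1 - tr q.2 p.1 + hm p.2 q.2,
     vbr p.2 q.2 + tl p.2 q.1 - tl q.2 p.1)

end GDExt

namespace GDExt

variable (K : Type*) [Field K]
variable (A V : Type*) [AddCommGroup A] [Module K A] [AddCommGroup V] [Module K V]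

/-- An extending datum of a GD bialgebra `A` by a vector space `V`. -/
structure ExtDatum where
  lA : A →ₗ[K] Module.End K V
  rA : A →ₗ[K] Module.End K V
  lV : V →ₗ[K] Module.End K A
  rV : V →ₗ[K] Module.End K A
  f : V →ₗ[K] V →ₗ[K] A
  st : V →ₗ[K] V →ₗ[K] V
  tl : V →ₗ[K] A →ₗ[K] V
  tr : V →ₗ[K] A →ₗ[K] A
  hm : V →ₗ[K] V →ₗ[K] A
  vbr : V →ₗ[K] V →ₗ[K] V

variable {K A V}

/-- The multiplication of the unified product associated to an extending datum. -/
def ExtDatum.mulMap (circ : A →ₗ[K] A →ₗ[K] A) (ω : ExtDatum K A V) : A × V → A × V → A × V :=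
  uniMul circ ω.lA ω.rA ω.lV ω.rV ω.f ω.st

/-- The bracket of the unified product associated to an extending datum. -/
def ExtDatum.brMap (brk : A →ₗ[K] A →ₗ[K] A) (ω : ExtDatum K A V) : A × V → A × V → A × V :=
  uniBr brk ω.tl ω.tr ω.hm ω.vbr

/-- Conditions (D1)-(D10) relating two extending data via a pair `(λ, μ)`. -/
def DCond (circ brk : A →ₗ[K] A →ₗ[K] A) (ω ω' : ExtDatum K A V)
    (l : V →ₗ[K] A) (m : V ≃ₗ[K] V) : Prop :=
  -- (D1)
  (∀ (a : A) (x : V), ω.rA a x = m.symm (ω'.rA a (m x))) ∧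
  -- (D2)
  (∀ (a : A) (x : V), ω.lA a x = m.symm (ω'.lA a (m x))) ∧
  -- (D3)
  (∀ (a : A) (x : V), ω.lV x a = circ (l x) a + ω'.lV (m x) a - l (m.symm (ω'.rA a (m x)))) ∧
  -- (D4)
  (∀ (a : A) (x : V), ω.rV x a = circ a (l x) + ω'.rV (m x) a - l (m.symm (ω'.lA a (m x)))) ∧
  -- (D5)
  (∀ x y : V, ω.st x y = m.symm (ω'.st (m x) (m y)) + m.symm (ω'.lA (l x) (m y))
      + m.symm (ω'.rA (l y) (m x))) ∧
  -- (D6)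
  (∀ x y : V, ω.f x y = circ (l x) (l y) + ω'.lV (m x) (l y) + ω'.rV (m y) (l x)
      + ω'.f (m x) (m y) - l (m.symm (ω'.st (m x) (m y))) - l (m.symm (ω'.lA (l x) (m y)))
      - l (m.symm (ω'.rA (l y) (m x)))) ∧
  -- (D7)
  (∀ (a : A) (x : V), ω.tl x a = m.symm (ω'.tl (m x) a)) ∧
  -- (D8)
  (∀ (a : A) (x : V), ω.tr x a = brk (l x) a + ω'.tr (m x) a - l (m.symm (ω'.tl (m x) a))) ∧
  -- (D9)
  (∀ x y : V, ω.hm x y = brk (l x) (l y) + ω'.tr (m x) (l y) - ω'.tr (m y) (l x)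
      + ω'.hm (m x) (m y) - l (m.symm (ω'.vbr (m x) (m y))) - l (m.symm (ω'.tl (m x) (l y)))
      + l (m.symm (ω'.tl (m y) (l x)))) ∧
  -- (D10)
  (∀ x y : V, ω.vbr x y = m.symm (ω'.vbr (m x) (m y)) + m.symm (ω'.tl (m x) (l y))
      - m.symm (ω'.tl (m y) (l x)))

/-- Two extending data are equivalent if they are related by some pair `(λ, μ)`
via conditions (D1)-(D10). -/
def DEquiv (circ brk : A →ₗ[K] A →ₗ[K] A) (ω ω' : ExtDatum K A V) : Prop :=
  ∃ (l : V →ₗ[K] A) (m : V ≃ₗ[K] V), DCond circ brk ω ω' l m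

end GDExt

namespace GDExt

variable {K E : Type*} [Field K] [AddCommGroup E] [Module K E]

/-- The GD bialgebra structures on `E` containing the GD bialgebra `(A, circ, brk)`
as a subalgebra (i.e. restricting to the given operations on `A`). -/
def GDStrOn (A : Submodule K E) (circ brk : ↥A →ₗ[K] ↥A →ₗ[K] ↥A) : Type _ :=
  {s : (E →ₗ[K] E →ₗ[K] E) × (E →ₗ[K] E →ₗ[K] E) //
    IsGD (fun u v => s.1 u v) (fun u v => s.2 u v) ∧
    ∀ a b : ↥A, s.1 a b = ((circ a b : ↥A) : E) ∧ s.2 a b = ((brk a b : ↥A) : E)}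

/-- Equivalence of GD bialgebra structures on `E` containing `A` as a subalgebra:
there is a GD bialgebra isomorphism whose restriction to `A` is the identity. -/
def GDStrEquiv (A : Submodule K E) (circ brk : ↥A →ₗ[K] ↥A →ₗ[K] ↥A)
    (s s' : GDStrOn A circ brk) : Prop :=
  ∃ φ : E ≃ₗ[K] E,
    (∀ u v : E, φ (s.1.1 u v) = s'.1.1 (φ u) (φ v)) ∧
    (∀ u v : E, φ (s.1.2 u v) = s'.1.2 (φ u) (φ v)) ∧
    (∀ a : ↥A, φ (a : E) = (a : E))

end GDExt

namespace GDExt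


section Aux
variable {K : Type*} [Field K]
variable {A V : Type*} [AddCommGroup A] [Module K A] [AddCommGroup V] [Module K V]

/-- bilinear version of mulMap -/
def ExtDatum.mulHom (circ : A →ₗ[K] A →ₗ[K] A) (ω : ExtDatum K A V) :
    (A × V) →ₗ[K] (A × V) →ₗ[K] (A × V) :=
  LinearMap.mk₂ K (ω.mulMap circ)
    (by intro p p' q; simp [ExtDatum.mulMap, uniMul, Prod.ext_iff]; constructor <;> abel)
    (by intro c p q; simp [ExtDatum.mulMap, uniMul, Prod.ext_iff, smul_add])
    (by intro p q q'; simp [ExtDatum.mulMap, uniMul, Prod.ext_iff]; constructor <;> abel)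
    (by intro c p q; simp [ExtDatum.mulMap, uniMul, Prod.ext_iff, smul_add])

def ExtDatum.brHom (brk : A →ₗ[K] A →ₗ[K] A) (ω : ExtDatum K A V) :
    (A × V) →ₗ[K] (A × V) →ₗ[K] (A × V) :=
  LinearMap.mk₂ K (ω.brMap brk)
    (by intro p p' q; simp [ExtDatum.brMap, uniBr, Prod.ext_iff]; constructor <;> abel)
    (by intro c p q; simp [ExtDatum.brMap, uniBr, Prod.ext_iff, smul_sub, smul_add])
    (by intro p q q'; simp [ExtDatum.brMap, uniBr, Prod.ext_iff]; constructor <;> abel)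
    (by intro c p q; simp [ExtDatum.brMap, uniBr, Prod.ext_iff, smul_sub, smul_add])

@[simp] lemma ExtDatum.mulHom_apply (circ : A →ₗ[K] A →ₗ[K] A) (ω : ExtDatum K A V) (p q : A × V) :
    ω.mulHom circ p q = ω.mulMap circ p q := rfl

@[simp] lemma ExtDatum.brHom_apply (brk : A →ₗ[K] A →ₗ[K] A) (ω : ExtDatum K A V) (p q : A × V) :
    ω.brHom brk p q = ω.brMap brk p q := rfl

/-- transport of IsGD along a linear equivalence -/
lemma isGD_conj {M N : Type*} [AddCommGroup M] [Module K M] [AddCommGroup N] [Module K N]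
    (φ : M ≃ₗ[K] N) {m b : M → M → M} (h : IsGD m b) :
    IsGD (fun u v => φ (m (φ.symm u) (φ.symm v))) (fun u v => φ (b (φ.symm u) (φ.symm v))) := by
  obtain ⟨⟨hn1, hn2⟩, ⟨hl1, hl2⟩, hgd⟩ := h
  refine ⟨⟨?_, ?_⟩, ⟨?_, ?_⟩, ?_⟩
  · intro a b c; simp only [LinearEquiv.symm_apply_apply, ← map_sub]
    exact congrArg φ (hn1 _ _ _)
  · intro a b c; simp only [LinearEquiv.symm_apply_apply]
    exact congrArg φ (hn2 _ _ _)
  · intro a; simp [hl1]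
  · intro a b c; simp only [LinearEquiv.symm_apply_apply, ← map_add]
    exact congrArg φ (hl2 _ _ _)
  · intro a b c; simp only [LinearEquiv.symm_apply_apply, ← map_sub, ← map_add]
    rw [hgd]; simp

lemma isGD_conj_iff {M N : Type*} [AddCommGroup M] [Module K M] [AddCommGroup N] [Module K N]
    (φ : M ≃ₗ[K] N) (m b : M → M → M) :
    IsGD (fun u v => φ (m (φ.symm u) (φ.symm v))) (fun u v => φ (b (φ.symm u) (φ.symm v)))
      ↔ IsGD m b := by
  constructor
  · intro h
    have := isGD_conj φ.symm h
    simpa using this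
  · exact isGD_conj φ

end Aux

section Aux2
variable {K : Type*} [Field K]
variable {A V : Type*} [AddCommGroup A] [Module K A] [AddCommGroup V] [Module K V]

lemma skew_of_alt (B : A →ₗ[K] A →ₗ[K] A) (h : ∀ a, B a a = 0) (a b : A) :
    B a b = - B b a := by
  have h2 := h (a + b)
  simp only [map_add, LinearMap.add_apply, h a, h b] at h2
  rw [eq_neg_iff_add_eq_zero]
  rw [add_zero, zero_add] at h2
  linear_combination (norm := abel) h2

/-- the equivalence (a,x) ↦ (a + l x, m x) of A × V -/
def phiEquiv (l : V →ₗ[K] A) (m : V ≃ₗ[K] V) : (A × V) ≃ₗ[K] (A × V) :=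
  LinearEquiv.ofLinear
    ((LinearMap.fst K A V + l.comp (LinearMap.snd K A V)).prod
      ((m : V →ₗ[K] V).comp (LinearMap.snd K A V)))
    ((LinearMap.fst K A V - l.comp ((m.symm : V →ₗ[K] V).comp (LinearMap.snd K A V))).prod
      ((m.symm : V →ₗ[K] V).comp (LinearMap.snd K A V)))
    (by ext p <;> simp) (by ext p <;> simp)

@[simp] lemma phiEquiv_apply (l : V →ₗ[K] A) (m : V ≃ₗ[K] V) (p : A × V) :
    phiEquiv l m p = (p.1 + l p.2, m p.2) := rfl

lemma dcond_mulMap {circ brk : A →ₗ[K] A →ₗ[K] A} {ω ω' : ExtDatum K A V}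
    {l : V →ₗ[K] A} {m : V ≃ₗ[K] V} (hd : DCond circ brk ω ω' l m) (p q : A × V) :
    phiEquiv l m (ω.mulMap circ p q) = ω'.mulMap circ (phiEquiv l m p) (phiEquiv l m q) := by
  obtain ⟨d1, d2, d3, d4, d5, d6, d7, d8, d9, d10⟩ := hd
  obtain ⟨a, x⟩ := p
  obtain ⟨b, y⟩ := q
  simp only [ExtDatum.mulMap, uniMul, phiEquiv_apply, Prod.mk.injEq]
  constructor
  · rw [d3 b x, d4 a y, d6 x y, d5 x y, d2 a y, d1 b x]
    simp only [map_add, map_sub, LinearMap.add_apply, LinearMap.sub_apply]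
    abel
  · rw [d5 x y, d2 a y, d1 b x]
    simp only [map_add, LinearMap.add_apply, LinearEquiv.apply_symm_apply]
    abel

lemma dcond_brMap {circ brk : A →ₗ[K] A →ₗ[K] A} {ω ω' : ExtDatum K A V}
    (hskew : ∀ u v : A, brk u v = - brk v u)
    {l : V →ₗ[K] A} {m : V ≃ₗ[K] V} (hd : DCond circ brk ω ω' l m) (p q : A × V) :
    phiEquiv l m (ω.brMap brk p q) = ω'.brMap brk (phiEquiv l m p) (phiEquiv l m q) := by
  obtain ⟨d1, d2, d3, d4, d5, d6, d7, d8, d9, d10⟩ := hd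
  obtain ⟨a, x⟩ := p
  obtain ⟨b, y⟩ := q
  simp only [ExtDatum.brMap, uniBr, phiEquiv_apply, Prod.mk.injEq]
  constructor
  · rw [d8 b x, d8 a y, d9 x y, d10 x y, d7 b x, d7 a y]
    simp only [map_add, map_sub, LinearMap.add_apply, LinearMap.sub_apply]
    rw [hskew a (l y)]
    abel
  · rw [d10 x y, d7 b x, d7 a y]
    simp only [map_add, map_sub, LinearMap.add_apply, LinearMap.sub_apply,
      LinearEquiv.apply_symm_apply]
    abel

end Aux2

section Aux3
variable {K : Type*} [Field K]
variable {A V : Type*} [AddCommGroup A] [Module K A] [AddCommGroup V] [Module K V]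

set_option maxHeartbeats 2000000 in
lemma dcond_of_psi {circ brk : A →ₗ[K] A →ₗ[K] A} {ω ω' : ExtDatum K A V}
    (Ψ : (A × V) ≃ₗ[K] (A × V)) (hA : ∀ a : A, Ψ (a, 0) = (a, 0))
    (hmul : ∀ p q, Ψ (ω.mulMap circ p q) = ω'.mulMap circ (Ψ p) (Ψ q))
    (hbr : ∀ p q, Ψ (ω.brMap brk p q) = ω'.brMap brk (Ψ p) (Ψ q)) :
    DEquiv circ brk ω ω' := by
  set l : V →ₗ[K] A := (LinearMap.fst K A V) ∘ₗ (Ψ : A × V →ₗ[K] A × V) ∘ₗ (LinearMap.inr K A V)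
    with hl
  set m₀ : V →ₗ[K] V := (LinearMap.snd K A V) ∘ₗ (Ψ : A × V →ₗ[K] A × V) ∘ₗ (LinearMap.inr K A V)
    with hm₀
  have hΨ : ∀ p : A × V, Ψ p = (p.1 + l p.2, m₀ p.2) := by
    intro p
    have h2 : Ψ (0, p.2) = (l p.2, m₀ p.2) := rfl
    calc Ψ p = Ψ ((p.1, 0) + (0, p.2)) := by simp
    _ = (p.1, 0) + (l p.2, m₀ p.2) := by rw [map_add, hA, h2]
    _ = (p.1 + l p.2, m₀ p.2) := by simp
  have hminj : Function.Injective m₀ := by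
    intro x y hxy
    have h1 : Ψ (-(l x) + l y, x) = Ψ (0, y) := by
      rw [hΨ, hΨ]
      simp [hxy]
    have := Ψ.injective h1
    exact congrArg Prod.snd this
  have hmsurj : Function.Surjective m₀ := by
    intro y
    refine ⟨(Ψ.symm (0, y)).2, ?_⟩
    have := hΨ (Ψ.symm (0, y))
    rw [Ψ.apply_symm_apply] at this
    exact (congrArg Prod.snd this).symm
  set m : V ≃ₗ[K] V := LinearEquiv.ofBijective m₀ ⟨hminj, hmsurj⟩ with hm
  have hmx : ∀ x : V, m x = m₀ x := fun _ => rfl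
  refine ⟨l, m, ?_⟩
  -- helper to extract component equations
  have key : ∀ p q : A × V,
      ((ω.mulMap circ p q).1 + l (ω.mulMap circ p q).2, m₀ (ω.mulMap circ p q).2)
        = ω'.mulMap circ (p.1 + l p.2, m₀ p.2) (q.1 + l q.2, m₀ q.2) := by
    intro p q
    rw [← hΨ, ← hΨ, ← hΨ]; exact hmul p q
  have keyb : ∀ p q : A × V,
      ((ω.brMap brk p q).1 + l (ω.brMap brk p q).2, m₀ (ω.brMap brk p q).2)
        = ω'.brMap brk (p.1 + l p.2, m₀ p.2) (q.1 + l q.2, m₀ q.2) := by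
    intro p q
    rw [← hΨ, ← hΨ, ← hΨ]; exact hbr p q
  have d1 : ∀ (a : A) (x : V), ω.rA a x = m.symm (ω'.rA a (m x)) := by
    intro b x
    rw [LinearEquiv.eq_symm_apply, hmx, hmx]
    have := congrArg Prod.snd (key (0, x) (b, 0))
    simpa [ExtDatum.mulMap, uniMul] using this
  have d2 : ∀ (a : A) (x : V), ω.lA a x = m.symm (ω'.lA a (m x)) := by
    intro a y
    rw [LinearEquiv.eq_symm_apply, hmx, hmx]
    have := congrArg Prod.snd (key (a, 0) (0, y))
    simpa [ExtDatum.mulMap, uniMul] using this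
  have d5 : ∀ x y : V, ω.st x y = m.symm (ω'.st (m x) (m y)) + m.symm (ω'.lA (l x) (m y))
      + m.symm (ω'.rA (l y) (m x)) := by
    intro x y
    rw [← map_add, ← map_add, LinearEquiv.eq_symm_apply, hmx, hmx, hmx]
    have := congrArg Prod.snd (key (0, x) (0, y))
    simpa [ExtDatum.mulMap, uniMul] using this
  have d3 : ∀ (a : A) (x : V), ω.lV x a = circ (l x) a + ω'.lV (m x) a
      - l (m.symm (ω'.rA a (m x))) := by
    intro b x
    have h := congrArg Prod.fst (key (0, x) (b, 0))
    simp only [ExtDatum.mulMap, uniMul, map_zero, LinearMap.zero_apply, zero_add, add_zero,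
      LinearMap.map_zero] at h
    rw [d1 b x] at h
    simp only [hmx] at h ⊢
    rw [← sub_eq_zero] at h ⊢
    abel_nf at h ⊢
    exact h
  have d4 : ∀ (a : A) (x : V), ω.rV x a = circ a (l x) + ω'.rV (m x) a
      - l (m.symm (ω'.lA a (m x))) := by
    intro a y
    have h := congrArg Prod.fst (key (a, 0) (0, y))
    simp only [ExtDatum.mulMap, uniMul, map_zero, LinearMap.zero_apply, zero_add, add_zero,
      LinearMap.map_zero] at h
    rw [d2 a y] at h
    simp only [hmx] at h ⊢
    rw [← sub_eq_zero] at h ⊢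
    abel_nf at h ⊢
    exact h
  have d6 : ∀ x y : V, ω.f x y = circ (l x) (l y) + ω'.lV (m x) (l y) + ω'.rV (m y) (l x)
      + ω'.f (m x) (m y) - l (m.symm (ω'.st (m x) (m y))) - l (m.symm (ω'.lA (l x) (m y)))
      - l (m.symm (ω'.rA (l y) (m x))) := by
    intro x y
    have h := congrArg Prod.fst (key (0, x) (0, y))
    simp only [ExtDatum.mulMap, uniMul, map_zero, LinearMap.zero_apply, zero_add, add_zero,
      LinearMap.map_zero] at h
    rw [d5 x y] at h
    simp only [hmx, map_add] at h ⊢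
    rw [← sub_eq_zero] at h ⊢
    abel_nf at h ⊢
    exact h
  have d7 : ∀ (a : A) (x : V), ω.tl x a = m.symm (ω'.tl (m x) a) := by
    intro b x
    rw [LinearEquiv.eq_symm_apply, hmx, hmx]
    have h := congrArg Prod.snd (keyb (0, x) (b, 0))
    simpa [ExtDatum.brMap, uniBr] using h
  have d10 : ∀ x y : V, ω.vbr x y = m.symm (ω'.vbr (m x) (m y)) + m.symm (ω'.tl (m x) (l y))
      - m.symm (ω'.tl (m y) (l x)) := by
    intro x y
    rw [← map_add, ← map_sub, LinearEquiv.eq_symm_apply, hmx, hmx, hmx]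
    have h := congrArg Prod.snd (keyb (0, x) (0, y))
    simpa [ExtDatum.brMap, uniBr] using h
  have d8 : ∀ (a : A) (x : V), ω.tr x a = brk (l x) a + ω'.tr (m x) a
      - l (m.symm (ω'.tl (m x) a)) := by
    intro b x
    have h := congrArg Prod.fst (keyb (0, x) (b, 0))
    simp only [ExtDatum.brMap, uniBr, map_zero, LinearMap.zero_apply, zero_add, add_zero,
      sub_zero, zero_sub, LinearMap.map_zero] at h
    rw [d7 b x] at h
    simp only [hmx] at h ⊢
    rw [← sub_eq_zero] at h ⊢
    abel_nf at h ⊢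
    exact h
  have d9 : ∀ x y : V, ω.hm x y = brk (l x) (l y) + ω'.tr (m x) (l y) - ω'.tr (m y) (l x)
      + ω'.hm (m x) (m y) - l (m.symm (ω'.vbr (m x) (m y))) - l (m.symm (ω'.tl (m x) (l y)))
      + l (m.symm (ω'.tl (m y) (l x))) := by
    intro x y
    have h := congrArg Prod.fst (keyb (0, x) (0, y))
    simp only [ExtDatum.brMap, uniBr, map_zero, LinearMap.zero_apply, zero_add, add_zero,
      sub_zero, zero_sub, LinearMap.map_zero] at h
    rw [d10 x y] at h
    simp only [hmx, map_add, map_sub] at h ⊢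
    rw [← sub_eq_zero] at h ⊢
    abel_nf at h ⊢
    exact h
  exact ⟨d1, d2, d3, d4, d5, d6, d7, d8, d9, d10⟩

end Aux3

section Aux4
variable {K E : Type*} [Field K] [AddCommGroup E] [Module K E]
variable (A V : Submodule K E) (hc : IsCompl A V)

/-- the canonical equivalence `A × V ≃ E` -/
noncomputable def cEquiv : (↥A × ↥V) ≃ₗ[K] E := Submodule.prodEquivOfIsCompl A V hc

lemma cEquiv_apply (p : ↥A × ↥V) : cEquiv A V hc p = (p.1 : E) + (p.2 : E) := rfl

lemma cEquiv_apply_left (a : ↥A) : cEquiv A V hc (a, 0) = (a : E) := by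
  simp [cEquiv_apply]

lemma cEquiv_symm_coe (a : ↥A) : (cEquiv A V hc).symm (a : E) = (a, 0) :=
  Submodule.prodEquivOfIsCompl_symm_apply_left A V hc a

/-- push a bilinear map on `A × V` forward to `E` -/
noncomputable def conjB (B : (↥A × ↥V) →ₗ[K] (↥A × ↥V) →ₗ[K] (↥A × ↥V)) :
    E →ₗ[K] E →ₗ[K] E :=
  (B.compl₁₂ ((cEquiv A V hc).symm : E →ₗ[K] ↥A × ↥V)
    ((cEquiv A V hc).symm : E →ₗ[K] ↥A × ↥V)).compr₂ (cEquiv A V hc : ↥A × ↥V →ₗ[K] E)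

lemma conjB_apply (B : (↥A × ↥V) →ₗ[K] (↥A × ↥V) →ₗ[K] (↥A × ↥V)) (u v : E) :
    conjB A V hc B u v
      = cEquiv A V hc (B ((cEquiv A V hc).symm u) ((cEquiv A V hc).symm v)) := rfl

variable (circ brk : ↥A →ₗ[K] ↥A →ₗ[K] ↥A)

lemma mulMap_coe_coe (ω : ExtDatum K ↥A ↥V) (a b : ↥A) :
    ω.mulMap circ (a, 0) (b, 0) = (circ a b, 0) := by
  simp [ExtDatum.mulMap, uniMul]

lemma brMap_coe_coe (ω : ExtDatum K ↥A ↥V) (a b : ↥A) :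
    ω.brMap brk (a, 0) (b, 0) = (brk a b, 0) := by
  simp [ExtDatum.brMap, uniBr]

/-- the transported GD structure on `E` of a unified product datum -/
noncomputable def transT (ω : {ω : ExtDatum K ↥A ↥V // IsGD (ω.mulMap circ) (ω.brMap brk)}) :
    GDStrOn A circ brk := by
  refine ⟨(conjB A V hc (ω.1.mulHom circ), conjB A V hc (ω.1.brHom brk)), ?_, ?_⟩
  · have := isGD_conj (cEquiv A V hc) ω.2
    convert this using 2 <;> rfl
  · intro a b
    constructor
    · rw [conjB_apply, cEquiv_symm_coe, cEquiv_symm_coe]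
      rw [ExtDatum.mulHom_apply, mulMap_coe_coe, cEquiv_apply_left]
    · rw [conjB_apply, cEquiv_symm_coe, cEquiv_symm_coe]
      rw [ExtDatum.brHom_apply, brMap_coe_coe, cEquiv_apply_left]

lemma transT_mul (ω : {ω : ExtDatum K ↥A ↥V // IsGD (ω.mulMap circ) (ω.brMap brk)})
    (p q : ↥A × ↥V) :
    (transT A V hc circ brk ω).1.1 (cEquiv A V hc p) (cEquiv A V hc q)
      = cEquiv A V hc (ω.1.mulMap circ p q) := by
  rw [transT, conjB_apply]
  simp [LinearEquiv.symm_apply_apply]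

lemma transT_br (ω : {ω : ExtDatum K ↥A ↥V // IsGD (ω.mulMap circ) (ω.brMap brk)})
    (p q : ↥A × ↥V) :
    (transT A V hc circ brk ω).1.2 (cEquiv A V hc p) (cEquiv A V hc q)
      = cEquiv A V hc (ω.1.brMap brk p q) := by
  rw [transT, conjB_apply]
  simp [LinearEquiv.symm_apply_apply]

end Aux4

section Aux5
variable {K E : Type*} [Field K] [AddCommGroup E] [Module K E]
variable (A V : Submodule K E) (hc : IsCompl A V)
variable (circ brk : ↥A →ₗ[K] ↥A →ₗ[K] ↥A)

/-- pull a bilinear map on `E` back to `A × V` -/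
noncomputable def pullB (s1 : E →ₗ[K] E →ₗ[K] E) :
    (↥A × ↥V) →ₗ[K] (↥A × ↥V) →ₗ[K] (↥A × ↥V) :=
  (s1.compl₁₂ ((cEquiv A V hc) : ↥A × ↥V →ₗ[K] E) ((cEquiv A V hc) : ↥A × ↥V →ₗ[K] E)).compr₂
    ((cEquiv A V hc).symm : E →ₗ[K] ↥A × ↥V)

lemma pullB_apply (s1 : E →ₗ[K] E →ₗ[K] E) (p q : ↥A × ↥V) :
    pullB A V hc s1 p q
      = (cEquiv A V hc).symm (s1 (cEquiv A V hc p) (cEquiv A V hc q)) := rfl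

/-- the extending datum extracted from a GD structure on `E` -/
noncomputable def datumOf (s : GDStrOn A circ brk) : ExtDatum K ↥A ↥V :=
  letI S := pullB A V hc s.1.1
  letI B := pullB A V hc s.1.2
  { lA := (S.compl₁₂ (LinearMap.inl K ↥A ↥V) (LinearMap.inr K ↥A ↥V)).compr₂ (LinearMap.snd K ↥A ↥V)
    rA := ((S.flip).compl₁₂ (LinearMap.inl K ↥A ↥V) (LinearMap.inr K ↥A ↥V)).compr₂
      (LinearMap.snd K ↥A ↥V)
    lV := (S.compl₁₂ (LinearMap.inr K ↥A ↥V) (LinearMap.inl K ↥A ↥V)).compr₂ (LinearMap.fst K ↥A ↥V)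
    rV := ((S.flip).compl₁₂ (LinearMap.inr K ↥A ↥V) (LinearMap.inl K ↥A ↥V)).compr₂
      (LinearMap.fst K ↥A ↥V)
    f := (S.compl₁₂ (LinearMap.inr K ↥A ↥V) (LinearMap.inr K ↥A ↥V)).compr₂ (LinearMap.fst K ↥A ↥V)
    st := (S.compl₁₂ (LinearMap.inr K ↥A ↥V) (LinearMap.inr K ↥A ↥V)).compr₂ (LinearMap.snd K ↥A ↥V)
    tl := (B.compl₁₂ (LinearMap.inr K ↥A ↥V) (LinearMap.inl K ↥A ↥V)).compr₂ (LinearMap.snd K ↥A ↥V)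
    tr := (B.compl₁₂ (LinearMap.inr K ↥A ↥V) (LinearMap.inl K ↥A ↥V)).compr₂ (LinearMap.fst K ↥A ↥V)
    hm := (B.compl₁₂ (LinearMap.inr K ↥A ↥V) (LinearMap.inr K ↥A ↥V)).compr₂ (LinearMap.fst K ↥A ↥V)
    vbr := (B.compl₁₂ (LinearMap.inr K ↥A ↥V) (LinearMap.inr K ↥A ↥V)).compr₂
      (LinearMap.snd K ↥A ↥V) }

lemma pullB_coe_coe (s : GDStrOn A circ brk) (a b : ↥A) :
    pullB A V hc s.1.1 (a, 0) (b, 0) = (circ a b, 0) := by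
  rw [pullB_apply, cEquiv_apply_left, cEquiv_apply_left, (s.2.2 a b).1, cEquiv_symm_coe]

lemma pullBr_coe_coe (s : GDStrOn A circ brk) (a b : ↥A) :
    pullB A V hc s.1.2 (a, 0) (b, 0) = (brk a b, 0) := by
  rw [pullB_apply, cEquiv_apply_left, cEquiv_apply_left, (s.2.2 a b).2, cEquiv_symm_coe]

lemma pullBr_skew (s : GDStrOn A circ brk) (p q : ↥A × ↥V) :
    pullB A V hc s.1.2 p q = - pullB A V hc s.1.2 q p := by
  rw [pullB_apply, pullB_apply]
  have halt : ∀ u : E, s.1.2 u u = 0 := s.2.1.2.1.1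
  rw [skew_of_alt s.1.2 halt, map_neg]

lemma datumOf_mulMap (s : GDStrOn A circ brk) (p q : ↥A × ↥V) :
    (datumOf A V hc circ brk s).mulMap circ p q = pullB A V hc s.1.1 p q := by
  obtain ⟨a, x⟩ := p
  obtain ⟨b, y⟩ := q
  have hp : ((a, x) : ↥A × ↥V) = (a, 0) + (0, x) := by simp
  have hq : ((b, y) : ↥A × ↥V) = (b, 0) + (0, y) := by simp
  conv_rhs => rw [hp, hq]
  simp only [map_add, LinearMap.add_apply]
  rw [pullB_coe_coe A V hc circ brk s]
  simp only [ExtDatum.mulMap, uniMul, datumOf]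
  ext
  · simp only [Prod.fst_add, LinearMap.compr₂_apply, LinearMap.compl₁₂_apply,
      LinearMap.flip_apply, LinearMap.inl_apply, LinearMap.inr_apply, LinearMap.fst_apply,
      LinearMap.snd_apply]
    abel
  · simp only [Prod.snd_add, LinearMap.compr₂_apply, LinearMap.compl₁₂_apply,
      LinearMap.flip_apply, LinearMap.inl_apply, LinearMap.inr_apply, LinearMap.fst_apply,
      LinearMap.snd_apply]
    abel

lemma datumOf_brMap (s : GDStrOn A circ brk) (p q : ↥A × ↥V) :
    (datumOf A V hc circ brk s).brMap brk p q = pullB A V hc s.1.2 p q := by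
  obtain ⟨a, x⟩ := p
  obtain ⟨b, y⟩ := q
  have hp : ((a, x) : ↥A × ↥V) = (a, 0) + (0, x) := by simp
  have hq : ((b, y) : ↥A × ↥V) = (b, 0) + (0, y) := by simp
  conv_rhs => rw [hp, hq]
  simp only [map_add, LinearMap.add_apply]
  rw [pullBr_coe_coe A V hc circ brk s,
    pullBr_skew A V hc circ brk s ((a, 0) : ↥A × ↥V) ((0, y) : ↥A × ↥V)]
  simp only [ExtDatum.brMap, uniBr, datumOf]
  ext
  · simp only [Prod.fst_add, Prod.fst_neg, LinearMap.compr₂_apply, LinearMap.compl₁₂_apply,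
      LinearMap.flip_apply, LinearMap.inl_apply, LinearMap.inr_apply, LinearMap.fst_apply,
      LinearMap.snd_apply]
    abel
  · simp only [Prod.snd_add, Prod.snd_neg, LinearMap.compr₂_apply, LinearMap.compl₁₂_apply,
      LinearMap.flip_apply, LinearMap.inl_apply, LinearMap.inr_apply, LinearMap.fst_apply,
      LinearMap.snd_apply]
    abel

lemma datumOf_isGD (s : GDStrOn A circ brk) :
    IsGD ((datumOf A V hc circ brk s).mulMap circ) ((datumOf A V hc circ brk s).brMap brk) := by
  have h := isGD_conj (cEquiv A V hc).symm s.2.1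
  simp only [LinearEquiv.symm_symm] at h
  have h1 : (datumOf A V hc circ brk s).mulMap circ =
      fun p q => (cEquiv A V hc).symm (s.1.1 (cEquiv A V hc p) (cEquiv A V hc q)) := by
    funext p q
    rw [datumOf_mulMap, pullB_apply]
  have h2 : (datumOf A V hc circ brk s).brMap brk =
      fun p q => (cEquiv A V hc).symm (s.1.2 (cEquiv A V hc p) (cEquiv A V hc q)) := by
    funext p q
    rw [datumOf_brMap, pullB_apply]
  rw [h1, h2]
  exact h

lemma transT_datumOf (s : GDStrOn A circ brk) :
    transT A V hc circ brk ⟨datumOf A V hc circ brk s, datumOf_isGD A V hc circ brk s⟩ = s := by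
  apply Subtype.ext
  apply Prod.ext
  · apply LinearMap.ext₂
    intro u v
    show conjB A V hc ((datumOf A V hc circ brk s).mulHom circ) u v = _
    rw [conjB_apply, ExtDatum.mulHom_apply, datumOf_mulMap, pullB_apply]
    simp
  · apply LinearMap.ext₂
    intro u v
    show conjB A V hc ((datumOf A V hc circ brk s).brHom brk) u v = _
    rw [conjB_apply, ExtDatum.brHom_apply, datumOf_brMap, pullB_apply]
    simp

end Aux5

section Aux6
variable {K E : Type*} [Field K] [AddCommGroup E] [Module K E]
variable (A V : Submodule K E) (hc : IsCompl A V)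
variable (circ brk : ↥A →ₗ[K] ↥A →ₗ[K] ↥A)

lemma gdStrEquiv_of_dequiv
    (hskew : ∀ u v : ↥A, brk u v = - brk v u)
    (ω ω' : {ω : ExtDatum K ↥A ↥V // IsGD (ω.mulMap circ) (ω.brMap brk)})
    (h : DEquiv circ brk ω.1 ω'.1) :
    GDStrEquiv A circ brk (transT A V hc circ brk ω) (transT A V hc circ brk ω') := by
  obtain ⟨l, m, hd⟩ := h
  refine ⟨((cEquiv A V hc).symm.trans (phiEquiv l m)).trans (cEquiv A V hc), ?_, ?_, ?_⟩
  · intro u v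
    obtain ⟨p, rfl⟩ := (cEquiv A V hc).surjective u
    obtain ⟨q, rfl⟩ := (cEquiv A V hc).surjective v
    simp only [LinearEquiv.trans_apply, LinearEquiv.symm_apply_apply]
    rw [transT_mul, LinearEquiv.symm_apply_apply, dcond_mulMap hd, ← transT_mul]
  · intro u v
    obtain ⟨p, rfl⟩ := (cEquiv A V hc).surjective u
    obtain ⟨q, rfl⟩ := (cEquiv A V hc).surjective v
    simp only [LinearEquiv.trans_apply, LinearEquiv.symm_apply_apply]
    rw [transT_br, LinearEquiv.symm_apply_apply, dcond_brMap hskew hd, ← transT_br]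
  · intro a
    simp only [LinearEquiv.trans_apply, cEquiv_symm_coe, phiEquiv_apply, map_zero, add_zero]
    exact cEquiv_apply_left A V hc a

lemma dequiv_of_gdStrEquiv
    (ω ω' : {ω : ExtDatum K ↥A ↥V // IsGD (ω.mulMap circ) (ω.brMap brk)})
    (h : GDStrEquiv A circ brk (transT A V hc circ brk ω) (transT A V hc circ brk ω')) :
    DEquiv circ brk ω.1 ω'.1 := by
  obtain ⟨φ, h1, h2, h3⟩ := h
  set Ψ : (↥A × ↥V) ≃ₗ[K] (↥A × ↥V) :=
    ((cEquiv A V hc).trans φ).trans (cEquiv A V hc).symm with hΨdef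
  have hΨap : ∀ p : ↥A × ↥V, Ψ p = (cEquiv A V hc).symm (φ (cEquiv A V hc p)) := fun _ => rfl
  apply dcond_of_psi Ψ
  · intro a
    rw [hΨap, cEquiv_apply_left, h3, cEquiv_symm_coe]
  · intro p q
    have key : ∀ u v : E, (cEquiv A V hc).symm ((transT A V hc circ brk ω').1.1 u v)
        = ExtDatum.mulMap circ ω'.1 ((cEquiv A V hc).symm u) ((cEquiv A V hc).symm v) := by
      intro u v
      conv_lhs => rw [← (cEquiv A V hc).apply_symm_apply u, ← (cEquiv A V hc).apply_symm_apply v]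
      rw [transT_mul, LinearEquiv.symm_apply_apply]
    rw [hΨap, ← transT_mul, h1, hΨap, hΨap, key]
  · intro p q
    have key : ∀ u v : E, (cEquiv A V hc).symm ((transT A V hc circ brk ω').1.2 u v)
        = ExtDatum.brMap brk ω'.1 ((cEquiv A V hc).symm u) ((cEquiv A V hc).symm v) := by
      intro u v
      conv_lhs => rw [← (cEquiv A V hc).apply_symm_apply u, ← (cEquiv A V hc).apply_symm_apply v]
      rw [transT_br, LinearEquiv.symm_apply_apply]
    rw [hΨap, ← transT_br, h2, hΨap, hΨap, key]

lemma gdStrEquiv_equivalence : Equivalence (GDStrEquiv A circ brk) := by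
  constructor
  · intro s
    exact ⟨LinearEquiv.refl K E, by simp, by simp, by simp⟩
  · rintro s s' ⟨φ, h1, h2, h3⟩
    refine ⟨φ.symm, ?_, ?_, ?_⟩
    · intro u v
      apply φ.injective
      rw [LinearEquiv.apply_symm_apply, h1, LinearEquiv.apply_symm_apply,
        LinearEquiv.apply_symm_apply]
    · intro u v
      apply φ.injective
      rw [LinearEquiv.apply_symm_apply, h2, LinearEquiv.apply_symm_apply,
        LinearEquiv.apply_symm_apply]
    · intro a
      apply φ.injective
      rw [LinearEquiv.apply_symm_apply, h3]
  · rintro s s' s'' ⟨φ, h1, h2, h3⟩ ⟨ψ, g1, g2, g3⟩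
    refine ⟨φ.trans ψ, ?_, ?_, ?_⟩
    · intro u v
      simp only [LinearEquiv.trans_apply, h1, g1]
    · intro u v
      simp only [LinearEquiv.trans_apply, h2, g2]
    · intro a
      simp only [LinearEquiv.trans_apply, h3, g3]

end Aux6

/-- Theorem 3.6: `GH²(V,A) = GD(A,V)/≡ → Extd(E,A)`, sending the class of an
extending structure to the class of its unified product (transported to `E = A ⊕ V`),
is a bijection. -/
theorem GHsq_bijective_extd
    {K E : Type*} [Field K] [AddCommGroup E] [Module K E]
    (A V : Submodule K E) (hc : IsCompl A V)
    (circ brk : ↥A →ₗ[K] ↥A →ₗ[K] ↥A)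
    (hGD : IsGD (fun a b => circ a b) (fun a b => brk a b)) :
    ∃ G : Quot (fun ω ω' : {ω : ExtDatum K ↥A ↥V // IsGD (ω.mulMap circ) (ω.brMap brk)} =>
            DEquiv circ brk ω.1 ω'.1)
        → Quot (GDStrEquiv A circ brk),
      Function.Bijective G ∧
      ∀ (ω : {ω : ExtDatum K ↥A ↥V // IsGD (ω.mulMap circ) (ω.brMap brk)})
        (s : GDStrOn A circ brk),
        (∀ (a b : ↥A) (x y : ↥V),
          s.1.1 ((a : E) + (x : E)) ((b : E) + (y : E))
            = ((ω.1.mulMap circ (a, x) (b, y)).1 : E) + ((ω.1.mulMap circ (a, x) (b, y)).2 : E) ∧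
          s.1.2 ((a : E) + (x : E)) ((b : E) + (y : E))
            = ((ω.1.brMap brk (a, x) (b, y)).1 : E) + ((ω.1.brMap brk (a, x) (b, y)).2 : E)) →
        G (Quot.mk _ ω) = Quot.mk _ s := by
  classical
  have hskew : ∀ u v : ↥A, brk u v = - brk v u := fun u v =>
    skew_of_alt brk (fun a => hGD.2.1.1 a) u v
  refine ⟨Quot.map (transT A V hc circ brk)
    (fun ω ω' h => gdStrEquiv_of_dequiv A V hc circ brk hskew ω ω' h), ⟨?_, ?_⟩, ?_⟩
  · intro qa qb
    induction qa using Quot.ind with | _ ω => ?_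
    induction qb using Quot.ind with | _ ω' => ?_
    intro h
    apply Quot.sound
    have hE : Relation.EqvGen (GDStrEquiv A circ brk)
        (transT A V hc circ brk ω) (transT A V hc circ brk ω') := Quot.eq.1 h
    exact dequiv_of_gdStrEquiv A V hc circ brk ω ω'
      (((gdStrEquiv_equivalence A circ brk).eqvGen_iff).1 hE)
  · intro qs
    induction qs using Quot.ind with | _ s => ?_
    exact ⟨Quot.mk _ ⟨datumOf A V hc circ brk s, datumOf_isGD A V hc circ brk s⟩,
      congrArg (Quot.mk _) (transT_datumOf A V hc circ brk s)⟩
  · intro ω s hs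
    have hT : transT A V hc circ brk ω = s := by
      apply Subtype.ext
      apply Prod.ext
      · apply LinearMap.ext₂
        intro u v
        obtain ⟨⟨a, x⟩, rfl⟩ := (cEquiv A V hc).surjective u
        obtain ⟨⟨b, y⟩, rfl⟩ := (cEquiv A V hc).surjective v
        rw [transT_mul,
          show (cEquiv A V hc) ((a, x) : ↥A × ↥V) = ((a : E) + (x : E)) from rfl,
          show (cEquiv A V hc) ((b, y) : ↥A × ↥V) = ((b : E) + (y : E)) from rfl,
          (hs a b x y).1]
        rfl
      · apply LinearMap.ext₂
        intro u v
        obtain ⟨⟨a, x⟩, rfl⟩ := (cEquiv A V hc).surjective u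
        obtain ⟨⟨b, y⟩, rfl⟩ := (cEquiv A V hc).surjective v
        rw [transT_br,
          show (cEquiv A V hc) ((a, x) : ↥A × ↥V) = ((a : E) + (x : E)) from rfl,
          show (cEquiv A V hc) ((b, y) : ↥A × ↥V) = ((b : E) + (y : E)) from rfl,
          (hs a b x y).2]
        rfl
    exact congrArg (Quot.mk _) hT

end GDExt
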